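/- Fix a constant c ≥ 3 and let m = cn. Then the probability that a random 3-uniform hypergraph H drawn from G^{(3)}_{n,m} is (1/c, 100c)-degree bounded tends to 1 as n → ∞. -/

import Mathlib

open scoped Classical

noncomputable section

namespace Giso

/-- Probability of `P` under the uniform distribution on the finite set `s`. -/
def prob {Ω : Type*} (s : Finset Ω) (P : Ω → Prop) : ℝ :=
  ((s.filter P).card : ℝ) / (s.card : ℝ)

/-- The sample space of `G^{(k)}_{n,m}`: edge sets of `k`-uniform hypergraphs on `[n]`
with exactly `m` hyperedges. -/
def hyperSpace (k n m : ℕ) : Finset (Finset (Finset (Fin n))) :=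
  Finset.univ.filter fun E => E.card = m ∧ ∀ e ∈ E, e.card = k

/-- Degree of a vertex in a hypergraph. -/
def hdeg {n : ℕ} (E : Finset (Finset (Fin n))) (v : Fin n) : ℕ :=
  (E.filter fun e => v ∈ e).card

/-- `(ε,D)`-degree boundedness: every set of `⌈εn⌉` vertices has average degree at
most `D`. -/
def DegBounded {n : ℕ} (E : Finset (Finset (Fin n))) (ε D : ℝ) : Prop :=
  ∀ S : Finset (Fin n), S.card = ⌈ε * n⌉₊ → ((∑ v ∈ S, hdeg E v : ℕ) : ℝ) ≤ D * S.card

open Finset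

section Helpers

variable {α : Type*} [DecidableEq α]

lemma card_supersets (A F : Finset α) (m t : ℕ) (hFA : F ⊆ A) (hF : F.card = t)
    (htm : t ≤ m) :
    ((A.powersetCard m).filter fun E => F ⊆ E).card = (A.card - t).choose (m - t) := by
  rw [show A.card - t = (A \ F).card by rw [card_sdiff_of_subset hFA, hF],
    ← Finset.card_powersetCard (m - t) (A \ F)]
  apply Finset.card_nbij' (fun E => E \ F) (fun G => G ∪ F)
  · intro E hE
    simp only [mem_coe, mem_filter, mem_powersetCard] at hE
    obtain ⟨⟨hEA, hEm⟩, hFE⟩ := hE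
    simp only [mem_coe, mem_powersetCard]
    exact ⟨sdiff_subset_sdiff hEA le_rfl, by rw [card_sdiff_of_subset hFE, hEm, hF]⟩
  · intro G hG
    simp only [mem_coe, mem_powersetCard] at hG
    obtain ⟨hGA, hGm⟩ := hG
    have hdisj : Disjoint G F := disjoint_of_subset_left hGA (sdiff_disjoint)
    simp only [mem_coe, mem_filter, mem_powersetCard]
    refine ⟨⟨union_subset (hGA.trans sdiff_subset) hFA, ?_⟩, subset_union_right⟩
    rw [card_union_of_disjoint hdisj, hGm, hF]
    omega
  · intro E hE
    simp only [mem_coe, mem_filter, mem_powersetCard] at hE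
    exact sdiff_union_of_subset hE.2
  · intro G hG
    simp only [mem_coe, mem_powersetCard] at hG
    have hdisj : Disjoint G F := disjoint_of_subset_left hG.1 (sdiff_disjoint)
    exact union_sdiff_cancel_right hdisj

lemma sum_choose_inter (A P : Finset α) (hPA : P ⊆ A) (m t : ℕ) (htm : t ≤ m) :
    ∑ E ∈ A.powersetCard m, ((E ∩ P).card.choose t)
      = P.card.choose t * (A.card - t).choose (m - t) := by
  have key : ∀ E ∈ A.powersetCard m,
      (E ∩ P).card.choose t = ((P.powersetCard t).filter fun F => F ⊆ E).card := by
    intro E _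
    rw [← Finset.card_powersetCard t (E ∩ P)]
    congr 1
    ext F
    simp only [mem_powersetCard, mem_filter, subset_inter_iff]
    tauto
  rw [Finset.sum_congr rfl key]
  simp only [Finset.card_filter]
  rw [Finset.sum_comm]
  have inner : ∀ F ∈ P.powersetCard t,
      (∑ E ∈ A.powersetCard m, if F ⊆ E then 1 else 0)
        = (A.card - t).choose (m - t) := by
    intro F hF
    simp only [mem_powersetCard] at hF
    rw [← Finset.card_filter]
    exact card_supersets A F m t (hF.1.trans hPA) hF.2 htm
  rw [Finset.sum_congr rfl inner, Finset.sum_const, Finset.card_powersetCard, smul_eq_mul]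

lemma badS_card_le (A P : Finset α) (hPA : P ⊆ A) (m t t' : ℕ) (htm : t ≤ m) :
    ((A.powersetCard m).filter fun E => t' ≤ (E ∩ P).card).card * t'.choose t
      ≤ P.card.choose t * (A.card - t).choose (m - t) := by
  calc ((A.powersetCard m).filter fun E => t' ≤ (E ∩ P).card).card * t'.choose t
      = ∑ _E ∈ (A.powersetCard m).filter fun E => t' ≤ (E ∩ P).card, t'.choose t := by
        rw [Finset.sum_const, smul_eq_mul]
    _ ≤ ∑ E ∈ (A.powersetCard m).filter fun E => t' ≤ (E ∩ P).card,
          ((E ∩ P).card.choose t) := by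
        apply Finset.sum_le_sum
        intro E hE
        exact Nat.choose_le_choose t (Finset.mem_filter.mp hE).2
    _ ≤ ∑ E ∈ A.powersetCard m, ((E ∩ P).card.choose t) :=
        Finset.sum_le_sum_of_subset (Finset.filter_subset _ _)
    _ = P.card.choose t * (A.card - t).choose (m - t) := sum_choose_inter A P hPA m t htm

lemma choose_le_two_pow (n s : ℕ) (h : s ≤ n) : n.choose s ≤ 2 ^ n := by
  calc n.choose s ≤ ∑ i ∈ Finset.range (n+1), n.choose i :=
        Finset.single_le_sum (fun i _ => Nat.zero_le _)
          (Finset.mem_range.mpr (Nat.lt_succ_of_le h))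
    _ = 2 ^ n := Nat.sum_range_choose n

end Helpers

lemma hyperSpace_eq (n m : ℕ) :
    hyperSpace 3 n m
      = Finset.powersetCard m ((Finset.univ : Finset (Fin n)).powersetCard 3) := by
  ext E
  simp only [hyperSpace, mem_filter, mem_univ, true_and, mem_powersetCard, subset_iff,
    subset_univ]
  constructor
  · rintro ⟨h1, h2⟩
    exact ⟨fun {e} he => by simp [mem_powersetCard, h2 e he], h1⟩
  · rintro ⟨h1, h2⟩
    exact ⟨h2, fun e he => by simpa [mem_powersetCard] using h1 he⟩

lemma sum_hdeg_le {n : ℕ} (E : Finset (Finset (Fin n))) (h3 : ∀ e ∈ E, e.card = 3)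
    (S : Finset (Fin n)) :
    ∑ v ∈ S, hdeg E v ≤ 3 * (E.filter fun e => (e ∩ S).Nonempty).card := by
  have h1 : ∑ v ∈ S, hdeg E v = ∑ e ∈ E, (S.filter fun v => v ∈ e).card := by
    simp only [hdeg, Finset.card_filter]
    exact Finset.sum_comm
  rw [h1, Finset.card_filter, Finset.mul_sum]
  apply Finset.sum_le_sum
  intro e he
  by_cases hne : (e ∩ S).Nonempty
  · rw [if_pos hne, mul_one]
    calc (S.filter fun v => v ∈ e).card = (S ∩ e).card := by
          rw [Finset.filter_mem_eq_inter]
      _ ≤ e.card := Finset.card_le_card inter_subset_right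
      _ = 3 := h3 e he
  · rw [if_neg hne, mul_zero, Nat.le_zero, Finset.card_eq_zero,
      Finset.filter_mem_eq_inter, ← Finset.not_nonempty_iff_eq_empty, Finset.inter_comm]
    exact hne

lemma card_meet_le {n : ℕ} (S : Finset (Fin n)) :
    (((Finset.univ : Finset (Fin n)).powersetCard 3).filter
      fun e => (e ∩ S).Nonempty).card ≤ S.card * n.choose 2 := by
  have hsub : (((Finset.univ : Finset (Fin n)).powersetCard 3).filter
      fun e => (e ∩ S).Nonempty)
      ⊆ S.biUnion fun v =>
          (((Finset.univ : Finset (Fin n)).powersetCard 2).image (insert v)) := by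
    intro e he
    simp only [mem_filter, mem_powersetCard] at he
    obtain ⟨⟨-, hcard⟩, ⟨v, hv⟩⟩ := he
    rw [Finset.mem_inter] at hv
    rw [Finset.mem_biUnion]
    refine ⟨v, hv.2, ?_⟩
    rw [Finset.mem_image]
    refine ⟨e.erase v, ?_, Finset.insert_erase hv.1⟩
    simp [mem_powersetCard, Finset.card_erase_of_mem hv.1, hcard]
  calc _ ≤ _ := Finset.card_le_card hsub
    _ ≤ ∑ v ∈ S, (((Finset.univ : Finset (Fin n)).powersetCard 2).image (insert v)).card :=
        Finset.card_biUnion_le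
    _ ≤ ∑ v ∈ S, n.choose 2 := by
        apply Finset.sum_le_sum
        intro v _
        calc _ ≤ (((Finset.univ : Finset (Fin n)).powersetCard 2)).card :=
              Finset.card_image_le
          _ = n.choose 2 := by rw [Finset.card_powersetCard, Finset.card_univ, Fintype.card_fin]
    _ = S.card * n.choose 2 := by rw [Finset.sum_const, smul_eq_mul]

lemma two_mul_choose_two (n : ℕ) : 2 * n.choose 2 = n * (n - 1) := by
  have h := Nat.descFactorial_eq_factorial_mul_choose n 2
  simp [Nat.descFactorial, Nat.factorial] at h
  rw [← h]; ring

lemma six_mul_choose_three (n : ℕ) : 6 * n.choose 3 = n * (n - 1) * (n - 2) := by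
  have h := Nat.descFactorial_eq_factorial_mul_choose n 3
  simp [Nat.descFactorial, Nat.factorial] at h
  rw [← h]; ring

lemma arith_mN (c : ℝ) (n N m : ℕ) (hc : 3 ≤ c) (hnR : 100 * (c+1) ≤ (n:ℝ))
    (hn400 : 400 ≤ n) (hm : (m:ℝ) = c * n)
    (hNR : 6 * (N:ℝ) = (n:ℝ) * ((n:ℝ) - 1) * ((n:ℝ) - 2)) : m ≤ N := by
  have hn400R : (400:ℝ) ≤ (n:ℝ) := by exact_mod_cast hn400
  have h6 : (6 * m : ℝ) ≤ 6 * (N:ℝ) := by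
    have hA : 600 * c ≤ 6 * (n:ℝ) - 600 := by linarith
    have hB : 6 * (n:ℝ) - 600 ≤ 100 * (((n:ℝ)-1) * ((n:ℝ)-2)) := by
      nlinarith [sq_nonneg ((n:ℝ) - 2)]
    have hC : (600 * c) * (n:ℝ) ≤ (100 * (((n:ℝ)-1) * ((n:ℝ)-2))) * (n:ℝ) :=
      mul_le_mul_of_nonneg_right (by linarith) (Nat.cast_nonneg n)
    rw [hm]
    nlinarith [hC, hNR]
  have : (m:ℝ) ≤ (N:ℝ) := by linarith
  exact_mod_cast this

lemma arith_main (n N C2 s m : ℕ) (hn400 : 400 ≤ n)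
    (hC2R : 2 * (C2:ℝ) = (n:ℝ) * ((n:ℝ) - 1))
    (hNR : 6 * (N:ℝ) = (n:ℝ) * ((n:ℝ) - 1) * ((n:ℝ) - 2))
    (hsm : s * m ≤ 2 * n ^ 2) (hnN : n ≤ N) :
    3 * (s * C2 * m) ≤ (32*n + 2) * (N + 1 - n) := by
  have hXR : ((N + 1 - n : ℕ):ℝ) = (N:ℝ) + 1 - n := by
    push_cast [Nat.cast_sub (by omega : n ≤ N + 1)]
    ring
  have h : ((3 * (s * C2 * m) : ℕ) : ℝ) ≤ (((32*n+2) * (N + 1 - n) : ℕ) : ℝ) := by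
    push_cast [hXR]
    have hsmR : (s:ℝ) * m ≤ 2 * (n:ℝ)^2 := by exact_mod_cast hsm
    have hC2nn : (0:ℝ) ≤ (C2:ℝ) := Nat.cast_nonneg _
    have l1 : 3 * ((s:ℝ) * C2 * m) ≤ 3 * (2*(n:ℝ)^2) * C2 := by
      nlinarith [mul_le_mul_of_nonneg_right hsmR hC2nn]
    have l2 : 3 * (2*(n:ℝ)^2) * C2 = 3 * (n:ℝ)^2 * ((n:ℝ) * ((n:ℝ)-1)) := by
      have e : 3 * (2*(n:ℝ)^2) * C2 = 3 * (n:ℝ)^2 * (2 * (C2:ℝ)) := by ring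
      rw [e, hC2R]
    have hn400R : (400:ℝ) ≤ (n:ℝ) := by exact_mod_cast hn400
    have hNval : (N:ℝ) = (n:ℝ) * ((n:ℝ)-1) * ((n:ℝ)-2) / 6 := by linarith [hNR]
    have l3 : 3 * (n:ℝ)^2 * ((n:ℝ) * ((n:ℝ)-1)) ≤ (32*(n:ℝ)+2) * ((N:ℝ)+1-n) := by
      rw [hNval]
      nlinarith [mul_nonneg (mul_nonneg (mul_nonneg
          (sub_nonneg.mpr hn400R) (Nat.cast_nonneg (α := ℝ) n))
          (Nat.cast_nonneg (α := ℝ) n)) (Nat.cast_nonneg (α := ℝ) n),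
        mul_nonneg (mul_nonneg (sub_nonneg.mpr hn400R)
          (Nat.cast_nonneg (α := ℝ) n)) (Nat.cast_nonneg (α := ℝ) n),
        sq_nonneg ((n:ℝ)), hn400R]
    linarith
  exact_mod_cast h

theorem random_hypergraph_degree_bounded (c : ℝ) (hc : 3 ≤ c) :
    ∀ ε : ℝ, 0 < ε → ∃ n₀ : ℕ, ∀ n : ℕ, n₀ ≤ n → ∀ m : ℕ, (m : ℝ) = c * n →
      1 - ε ≤ prob (hyperSpace 3 n m) (fun E => DegBounded E (1 / c) (100 * c)) := by
  intro ε hε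
  obtain ⟨n₁, hn₁⟩ := exists_pow_lt_of_lt_one hε (show (2:ℝ)/3 < 1 by norm_num)
  refine ⟨max n₁ ⌈(100:ℝ) * (c + 1)⌉₊, fun n hn m hm => ?_⟩
  have hc0 : (0:ℝ) < c := by linarith
  have hnn₁ : n₁ ≤ n := le_trans (le_max_left _ _) hn
  have hnR : 100 * (c + 1) ≤ (n:ℝ) := by
    have h1 : ⌈(100:ℝ) * (c + 1)⌉₊ ≤ n := le_trans (le_max_right _ _) hn
    calc (100:ℝ) * (c + 1) ≤ (⌈(100:ℝ) * (c+1)⌉₊ : ℝ) := Nat.le_ceil _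
      _ ≤ n := by exact_mod_cast h1
  have hn400 : 400 ≤ n := by
    have h : (400:ℝ) ≤ (n:ℝ) := by linarith
    exact_mod_cast h
  have hn0 : 0 < n := by omega
  obtain ⟨s, hs_def⟩ : ∃ s, s = ⌈1 / c * (n:ℝ)⌉₊ := ⟨_, rfl⟩
  obtain ⟨N, hN_def⟩ : ∃ N, N = n.choose 3 := ⟨_, rfl⟩
  obtain ⟨K, hK_def⟩ : ∃ K, K = (Finset.univ : Finset (Fin n)).powersetCard 3 := ⟨_, rfl⟩
  have hKcard : K.card = N := by
    rw [hK_def, Finset.card_powersetCard, Finset.card_univ, Fintype.card_fin]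
    exact hN_def.symm
  have hΩ : hyperSpace 3 n m = K.powersetCard m := by
    rw [hK_def]; exact hyperSpace_eq n m
  -- estimates on s, m
  have hsl : (n:ℝ) ≤ c * s := by
    rw [hs_def]
    have h := Nat.le_ceil (1 / c * (n:ℝ))
    have h2 := mul_le_mul_of_nonneg_left h hc0.le
    calc (n:ℝ) = c * (1 / c * n) := by field_simp
      _ ≤ c * ↑⌈1 / c * (n:ℝ)⌉₊ := h2
  have hsu : (s:ℝ) ≤ 1 / c * n + 1 := by
    rw [hs_def]; exact (Nat.ceil_lt_add_one (by positivity)).le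
  have hsn : s ≤ n := by
    rw [hs_def]
    apply Nat.ceil_le.mpr
    rw [div_mul_eq_mul_div, div_le_iff₀ hc0]
    nlinarith [Nat.cast_nonneg (α := ℝ) n]
  have hs1 : 0 < s := by
    rw [hs_def]
    apply Nat.ceil_pos.mpr
    have : (0:ℝ) < (n:ℝ) := by exact_mod_cast hn0
    positivity
  have hcn : c ≤ (n:ℝ) := by linarith
  have hm3n : 3 * n ≤ m := by
    have h : ((3 * n : ℕ) : ℝ) ≤ (m:ℝ) := by
      push_cast; rw [hm]; nlinarith [Nat.cast_nonneg (α := ℝ) n]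
    exact_mod_cast h
  have hnm : n ≤ m := le_trans (by omega) hm3n
  have hm0 : 0 < m := lt_of_lt_of_le hn0 hnm
  have hsm : s * m ≤ 2 * n ^ 2 := by
    have h : ((s * m : ℕ) : ℝ) ≤ ((2 * n ^ 2 : ℕ) : ℝ) := by
      push_cast
      have h1 : (s:ℝ) * m ≤ (1/c*n+1) * (c*n) := by
        rw [hm]
        apply mul_le_mul_of_nonneg_right hsu (by positivity)
      have h2 : (1/c*(n:ℝ)+1) * (c*n) = n*n + c*n := by field_simp
      nlinarith [mul_nonneg (sub_nonneg.mpr hcn) (Nat.cast_nonneg (α := ℝ) n)]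
    exact_mod_cast h
  have hn1c : (1:ℝ) ≤ (n:ℝ) := by exact_mod_cast hn0
  have hn1R : ((n - 1 : ℕ) : ℝ) = (n:ℝ) - 1 := by
    push_cast [Nat.cast_sub (by omega : 1 ≤ n)]; ring
  have hn2R : ((n - 2 : ℕ) : ℝ) = (n:ℝ) - 2 := by
    push_cast [Nat.cast_sub (by omega : 2 ≤ n)]; ring
  obtain ⟨C2, hC2_def⟩ : ∃ C2, C2 = n.choose 2 := ⟨_, rfl⟩
  have hC2R : 2 * (C2:ℝ) = (n:ℝ) * ((n:ℝ) - 1) := by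
    have h := two_mul_choose_two n
    rw [← hC2_def] at h
    have := congrArg (fun x : ℕ => (x : ℝ)) h
    push_cast at this
    rw [hn1R] at this
    exact_mod_cast this
  have hNR : 6 * (N:ℝ) = (n:ℝ) * ((n:ℝ) - 1) * ((n:ℝ) - 2) := by
    have h := six_mul_choose_three n
    rw [← hN_def] at h
    have := congrArg (fun x : ℕ => (x : ℝ)) h
    push_cast at this
    rw [hn1R, hn2R] at this
    exact_mod_cast this
  have hmN : m ≤ N := arith_mN c n N m hc hnR hn400 hm hNR
  have hnN : n ≤ N := hnm.trans hmN
  obtain ⟨T₀, hT0_def⟩ : ∃ T₀, T₀ = s * C2 := ⟨_, rfl⟩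
  obtain ⟨X, hX_def⟩ : ∃ X, X = N + 1 - n := ⟨_, rfl⟩
  -- the polynomial inequality
  have h6 : 3 * (T₀ * m) ≤ (32*n + 2) * X := by
    rw [hT0_def, hX_def]
    exact arith_main n N C2 s m hn400 hC2R hNR hsm hnN
  -- descFactorial bounds
  have hd2 : (32*n+2)^n ≤ n.factorial * (33*n+1).choose n := by
    have h := Nat.pow_sub_le_descFactorial (33*n+1) n
    rw [Nat.descFactorial_eq_factorial_mul_choose] at h
    have e : 33*n+1+1-n = 32*n+2 := by omega
    rwa [e] at h
  have hd3 : X^n ≤ n.factorial * N.choose n := by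
    have h := Nat.pow_sub_le_descFactorial N n
    rw [Nat.descFactorial_eq_factorial_mul_choose] at h
    rwa [hX_def]
  have hd4 : n.factorial * T₀.choose n ≤ T₀^n := by
    rw [← Nat.descFactorial_eq_factorial_mul_choose]
    exact Nat.descFactorial_le_pow _ _
  have hd5 : n.factorial * m.choose n ≤ m^n := by
    rw [← Nat.descFactorial_eq_factorial_mul_choose]
    exact Nat.descFactorial_le_pow _ _
  -- per-S bound
  have hperS : ∀ S : Finset (Fin n), S.card = s →
      ((K.powersetCard m).filter fun E =>
          33*n+1 ≤ (E ∩ (K.filter fun e => (e ∩ S).Nonempty)).card).card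
            * (33*n+1).choose n
        ≤ T₀.choose n * (N - n).choose (m - n) := by
    intro S hS
    calc ((K.powersetCard m).filter fun E =>
          33*n+1 ≤ (E ∩ (K.filter fun e => (e ∩ S).Nonempty)).card).card
            * (33*n+1).choose n
        ≤ (K.filter fun e => (e ∩ S).Nonempty).card.choose n
            * (K.card - n).choose (m - n) :=
          badS_card_le K _ (filter_subset _ _) m n (33*n+1) hnm
      _ ≤ T₀.choose n * (N - n).choose (m - n) := by
          rw [hKcard]
          apply Nat.mul_le_mul_right
          apply Nat.choose_le_choose
          calc (K.filter fun e => (e ∩ S).Nonempty).card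
              ≤ S.card * C2 := by rw [hK_def, hC2_def]; exact card_meet_le S
            _ = T₀ := by rw [hS, hT0_def]
  -- covering
  obtain ⟨B, hB_def⟩ : ∃ B, B = ((K.powersetCard m).filter fun E => ¬ DegBounded E (1/c) (100*c)).card := ⟨_, rfl⟩
  have hcover : B ≤ ∑ S ∈ (Finset.univ : Finset (Fin n)).powersetCard s,
      ((K.powersetCard m).filter fun E =>
        33*n+1 ≤ (E ∩ (K.filter fun e => (e ∩ S).Nonempty)).card).card := by
    rw [hB_def]
    refine le_trans (Finset.card_le_card ?_) Finset.card_biUnion_le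
    intro E hE
    simp only [Finset.mem_filter] at hE
    obtain ⟨hEΩ, hnd⟩ := hE
    rw [DegBounded] at hnd
    push_neg at hnd
    obtain ⟨S, hScard, hlt⟩ := hnd
    rw [Finset.mem_biUnion]
    have hScard' : S.card = s := by rw [hScard, hs_def]
    refine ⟨S, ?_, ?_⟩
    · rw [Finset.mem_powersetCard]
      exact ⟨Finset.subset_univ _, hScard'⟩
    rw [Finset.mem_filter]
    refine ⟨hEΩ, ?_⟩
    have hEK : E ⊆ K := (Finset.mem_powersetCard.mp hEΩ).1
    have hE3 : ∀ e ∈ E, e.card = 3 := by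
      intro e he
      have h := hEK he
      rw [hK_def, Finset.mem_powersetCard] at h
      exact h.2
    have hinter : E ∩ (K.filter fun e => (e ∩ S).Nonempty)
        = E.filter fun e => (e ∩ S).Nonempty := by
      ext e
      simp only [Finset.mem_inter, Finset.mem_filter]
      constructor
      · rintro ⟨h1, -, h2⟩; exact ⟨h1, h2⟩
      · rintro ⟨h1, h2⟩; exact ⟨h1, hEK h1, h2⟩
    rw [hinter]
    have hsum := sum_hdeg_le E hE3 S
    have h100 : (100:ℝ) * n < 3 * ((E.filter fun e => (e ∩ S).Nonempty).card : ℝ) := by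
      have hl : (100:ℝ) * c * S.card < (∑ v ∈ S, hdeg E v : ℕ) := hlt
      have hsumR : ((∑ v ∈ S, hdeg E v : ℕ) : ℝ)
          ≤ 3 * ((E.filter fun e => (e ∩ S).Nonempty).card : ℝ) := by
        exact_mod_cast hsum
      have hcs : (100:ℝ) * n ≤ 100 * c * S.card := by
        rw [hScard']
        linarith [hsl]
      linarith
    have h100' : 100 * n < 3 * (E.filter fun e => (e ∩ S).Nonempty).card := by
      exact_mod_cast h100
    omega
  -- assemble counting bound
  have h1 : B * ((33*n+1).choose n * N.choose n)
      ≤ 2^n * (T₀.choose n * m.choose n) * N.choose m := by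
    have step1 : B * (33*n+1).choose n
        ≤ n.choose s * (T₀.choose n * (N-n).choose (m-n)) := by
      calc B * (33*n+1).choose n
          ≤ (∑ S ∈ (Finset.univ : Finset (Fin n)).powersetCard s,
              ((K.powersetCard m).filter fun E =>
                33*n+1 ≤ (E ∩ (K.filter fun e => (e ∩ S).Nonempty)).card).card)
              * (33*n+1).choose n := Nat.mul_le_mul_right _ hcover
        _ = ∑ S ∈ (Finset.univ : Finset (Fin n)).powersetCard s,
              ((K.powersetCard m).filter fun E =>
                33*n+1 ≤ (E ∩ (K.filter fun e => (e ∩ S).Nonempty)).card).card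
              * (33*n+1).choose n := by rw [Finset.sum_mul]
        _ ≤ ∑ _S ∈ (Finset.univ : Finset (Fin n)).powersetCard s,
              T₀.choose n * (N-n).choose (m-n) := by
            apply Finset.sum_le_sum
            intro S hS
            exact hperS S (Finset.mem_powersetCard.mp hS).2
        _ = n.choose s * (T₀.choose n * (N-n).choose (m-n)) := by
            rw [Finset.sum_const, smul_eq_mul, Finset.card_powersetCard,
              Finset.card_univ, Fintype.card_fin]
    calc B * ((33*n+1).choose n * N.choose n)
        = (B * (33*n+1).choose n) * N.choose n := by ring
      _ ≤ (n.choose s * (T₀.choose n * (N-n).choose (m-n))) * N.choose n :=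
          Nat.mul_le_mul_right _ step1
      _ = n.choose s * (T₀.choose n * (N.choose n * (N-n).choose (m-n))) := by ring
      _ = n.choose s * (T₀.choose n * (N.choose m * m.choose n)) := by
          rw [← Nat.choose_mul hnm]
      _ ≤ 2^n * (T₀.choose n * (N.choose m * m.choose n)) :=
          Nat.mul_le_mul_right _ (choose_le_two_pow n s hsn)
      _ = 2^n * (T₀.choose n * m.choose n) * N.choose m := by ring
  have master : B * ((32*n+2)^n * X^n) ≤ 2^n * (T₀^n * m^n) * N.choose m := by
    calc B * ((32*n+2)^n * X^n)
        ≤ B * ((n.factorial * (33*n+1).choose n) * (n.factorial * N.choose n)) :=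
          Nat.mul_le_mul_left _ (Nat.mul_le_mul hd2 hd3)
      _ = (B * ((33*n+1).choose n * N.choose n)) * (n.factorial * n.factorial) := by
          ring
      _ ≤ (2^n * (T₀.choose n * m.choose n) * N.choose m)
            * (n.factorial * n.factorial) := Nat.mul_le_mul_right _ h1
      _ = 2^n * ((n.factorial * T₀.choose n) * (n.factorial * m.choose n))
            * N.choose m := by ring
      _ ≤ 2^n * (T₀^n * m^n) * N.choose m := by
          exact Nat.mul_le_mul (Nat.mul_le_mul le_rfl (Nat.mul_le_mul hd4 hd5)) le_rfl
  have hT₀0 : 0 < T₀ := by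
    rw [hT0_def, hC2_def]
    exact Nat.mul_pos hs1 (Nat.choose_pos (by omega))
  have key : B * 3^n ≤ 2^n * N.choose m := by
    have hpos : 0 < (T₀ * m)^n := pow_pos (Nat.mul_pos hT₀0 hm0) n
    apply Nat.le_of_mul_le_mul_right _ hpos
    calc B * 3^n * (T₀*m)^n = B * ((3*(T₀*m))^n) := by
          rw [mul_pow]; ring
      _ ≤ B * (((32*n+2)*X)^n) :=
          Nat.mul_le_mul_left _ (Nat.pow_le_pow_left h6 n)
      _ = B * ((32*n+2)^n * X^n) := by rw [mul_pow]
      _ ≤ 2^n * (T₀^n * m^n) * N.choose m := master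
      _ = 2^n * N.choose m * (T₀*m)^n := by rw [mul_pow]; ring
  -- finish with real arithmetic
  have hΩpos : 0 < N.choose m := Nat.choose_pos hmN
  have htot : (K.powersetCard m).card = N.choose m := by
    rw [Finset.card_powersetCard, hKcard]
  have hpart := Finset.card_filter_add_card_filter_not
      (s := K.powersetCard m) (p := fun E => DegBounded E (1/c) (100*c))
  have hGB : ((K.powersetCard m).filter fun E => DegBounded E (1/c) (100*c)).card + B
      = N.choose m := by
    rw [← htot, hB_def]
    exact hpart
  have h23 : ((2:ℝ)/3)^n ≤ ε :=
    le_trans (pow_le_pow_of_le_one (by norm_num) (by norm_num) hnn₁) hn₁.le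
  have hNm0 : (0:ℝ) < (N.choose m : ℝ) := by exact_mod_cast hΩpos
  have hBR : (B:ℝ) ≤ ε * N.choose m := by
    have hcast : (B:ℝ) * 3^n ≤ 2^n * (N.choose m : ℝ) := by exact_mod_cast key
    have h3pos : (0:ℝ) < 3^n := by positivity
    calc (B:ℝ) ≤ (2/3)^n * N.choose m := by
          rw [div_pow, div_mul_eq_mul_div, le_div_iff₀ h3pos]
          linarith
      _ ≤ ε * N.choose m := mul_le_mul_of_nonneg_right h23 (Nat.cast_nonneg _)
  unfold prob
  rw [hΩ, htot]
  rw [le_div_iff₀ hNm0]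
  have hGR : (((K.powersetCard m).filter fun E => DegBounded E (1/c) (100*c)).card : ℝ)
      = (N.choose m : ℝ) - B := by
    have := congrArg (fun x : ℕ => (x:ℝ)) hGB
    push_cast at this
    linarith
  rw [hGR]
  linarith [hBR, hNm0]

end Giso
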